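/- For every ε ∈ (0,1) and every real d > 1, the probability that G^{bip}_{n,d} contains an independent set I with |I∩L| ≥ (1−ε)·(log d/d)·n and |I∩R| ≥ (1−ε)·d^{ε−1}·n tends to 1 as n → ∞. -/

import Mathlib

open MeasureTheory Real Filter

noncomputable section

/-- Bernoulli measure on `Bool` with success probability `p`. -/
def coin (p : ℝ) : Measure Bool :=
  ENNReal.ofReal p • Measure.dirac true + ENNReal.ofReal (1 - p) • Measure.dirac false

/-- The random bipartite graph `G^bip_{n,d}`, as a product (Bernoulli(d/n)) measure on
edge-indicator vectors indexed by the `n * n` possible edges. -/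
def edgeMeasure (n : ℕ) (d : ℝ) : Measure (Fin (n * n) → Bool) :=
  Measure.pi fun _ => coin (d / n)

/-- Vertex set: the left class `L` is `Sum.inl`, the right class `R` is `Sum.inr`. -/
abbrev Vtx (n : ℕ) := Fin n ⊕ Fin n

/-- Adjacency in the bipartite graph with edge-indicator vector `A`:
`i ∈ L` and `j ∈ R` are adjacent iff the indicator of the edge `(i,j)` is `true`. -/
def adjB (n : ℕ) (A : Fin (n * n) → Bool) : Vtx n → Vtx n → Prop
  | Sum.inl i, Sum.inr j => A (finProdFinEquiv (i, j)) = true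
  | Sum.inr j, Sum.inl i => A (finProdFinEquiv (i, j)) = true
  | _, _ => False

/-- `S` is an independent set of the bipartite graph encoded by `A`. -/
def IsIndepSet (n : ℕ) (A : Fin (n * n) → Bool) (S : Set (Vtx n)) : Prop :=
  ∀ u ∈ S, ∀ v ∈ S, ¬ adjB n A u v

/-- `S ∩ L`. -/
def leftPart {n : ℕ} (S : Set (Vtx n)) : Set (Vtx n) := S ∩ Set.range Sum.inl

/-- `S ∩ R`. -/
def rightPart {n : ℕ} (S : Set (Vtx n)) : Set (Vtx n) := S ∩ Set.range Sum.inr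

/-- `S` is `γ`-balanced: `| |S ∩ L| - γ|S| | < 1`. -/
def IsBalanced (γ : ℝ) {n : ℕ} (S : Set (Vtx n)) : Prop :=
  |((leftPart S).ncard : ℝ) - γ * (S.ncard : ℝ)| < 1

/-! ### Auxiliary combinatorial and measure-theoretic machinery -/

attribute [local instance] Classical.propDecidable

/-- Bernoulli weight of one coordinate. -/
def wc (p : ℝ) (b : Bool) : ℝ := if b then p else 1 - p

/-- Product Bernoulli weight of an edge-indicator vector. -/
def Wt (m : ℕ) (p : ℝ) (A : Fin m → Bool) : ℝ := ∏ i, wc p (A i)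

/-- Real indicator of a proposition. -/
def ind (P : Prop) : ℝ := if P then 1 else 0

lemma ind_congr {P Q : Prop} (h : P ↔ Q) : ind P = ind Q := by rw [ind, ind, if_congr h rfl rfl]

lemma ind_mul_ind (P Q : Prop) : ind P * ind Q = ind (P ∧ Q) := by
  by_cases hP : P <;> by_cases hQ : Q <;> simp [ind, hP, hQ]

lemma sum_ind {ι : Type*} (s : Finset ι) (p : ι → Prop) :
    ∑ i ∈ s, ind (p i) = ((s.filter p).card : ℝ) := by
  unfold ind
  rw [Finset.sum_boole]

lemma coin_single (p : ℝ) (b : Bool) : coin p {b} = ENNReal.ofReal (wc p b) := by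
  cases b <;> simp [coin, wc]

instance coin_finite (p : ℝ) : IsFiniteMeasure (coin p) := by
  constructor
  simp only [coin, Measure.add_apply, Measure.smul_apply, smul_eq_mul]
  finiteness

lemma wc_nonneg {p : ℝ} (h0 : 0 ≤ p) (h1 : p ≤ 1) (b : Bool) : 0 ≤ wc p b := by
  cases b <;> simp [wc] <;> linarith

lemma Wt_nonneg (m : ℕ) {p : ℝ} (h0 : 0 ≤ p) (h1 : p ≤ 1) (A : Fin m → Bool) : 0 ≤ Wt m p A :=
  Finset.prod_nonneg fun i _ => wc_nonneg h0 h1 _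

lemma ofReal_prod' {ι : Type*} (s : Finset ι) (f : ι → ℝ) (h : ∀ i ∈ s, 0 ≤ f i) :
    ENNReal.ofReal (∏ i ∈ s, f i) = ∏ i ∈ s, ENNReal.ofReal (f i) := by
  induction s using Finset.cons_induction with
  | empty => simp
  | cons a s ha ih =>
      rw [Finset.prod_cons, Finset.prod_cons,
        ENNReal.ofReal_mul (h a (Finset.mem_cons_self a s)),
        ih (fun i hi => h i (Finset.mem_cons_of_mem hi))]

lemma pi_coin_single {m : ℕ} (p : ℝ) (h0 : 0 ≤ p) (h1 : p ≤ 1) (a : Fin m → Bool) :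
    Measure.pi (fun _ : Fin m => coin p) {a} = ENNReal.ofReal (Wt m p a) := by
  have h : ({a} : Set (Fin m → Bool)) = Set.pi Set.univ (fun i => {a i}) := by
    ext b; simp [funext_iff, eq_comm]
  rw [h, Measure.pi_pi]
  simp_rw [coin_single]
  rw [Wt, ofReal_prod' _ _ (fun i _ => wc_nonneg h0 h1 _)]

lemma pi_coin_finset {m : ℕ} (p : ℝ) (h0 : 0 ≤ p) (h1 : p ≤ 1) (s : Finset (Fin m → Bool)) :
    Measure.pi (fun _ : Fin m => coin p) ↑s = ENNReal.ofReal (∑ a ∈ s, Wt m p a) := by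
  have h : (↑s : Set (Fin m → Bool)) = ⋃ a ∈ s, {a} := by ext; simp
  rw [h, measure_biUnion_finset ?_ (fun a _ => (Set.to_countable _).measurableSet)]
  · simp_rw [pi_coin_single p h0 h1]
    rw [ENNReal.ofReal_sum_of_nonneg]
    intro a _; exact Wt_nonneg m h0 h1 a
  · intro a _ b _ hab
    simp [Function.onFun, Set.disjoint_singleton, hab]

lemma key_prod (p : ℝ) {m : ℕ} (K : Finset (Fin m)) :
    ∑ a : Fin m → Bool, (Wt m p a) * ind (∀ c ∈ K, a c = false)
      = (1 - p) ^ K.card := by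
  have step : ∀ a : Fin m → Bool,
      (Wt m p a) * ind (∀ c ∈ K, a c = false)
        = ∏ i, (wc p (a i) * (if i ∈ K then (if a i = false then 1 else 0) else 1)) := by
    intro a
    rw [Finset.prod_mul_distrib]
    congr 1
    by_cases h : ∀ c ∈ K, a c = false
    · rw [ind, if_pos h, Finset.prod_eq_one]
      intro i _
      by_cases hi : i ∈ K
      · simp [hi, h i hi]
      · simp [hi]
    · rw [ind, if_neg h]
      push_neg at h
      obtain ⟨c, hc, hac⟩ := h
      refine (Finset.prod_eq_zero (Finset.mem_univ c) ?_).symm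
      simp [hc, hac]
  simp_rw [step]
  have hg := Finset.sum_prod_piFinset (Finset.univ : Finset Bool)
    (fun (i : Fin m) (b : Bool) => wc p b * (if i ∈ K then (if b = false then 1 else 0) else 1))
  rw [Fintype.piFinset_univ] at hg
  rw [hg]
  have h2 : ∀ i : Fin m, (∑ b : Bool, wc p b * (if i ∈ K then (if b = false then 1 else 0) else 1))
      = if i ∈ K then 1 - p else 1 := by
    intro i
    by_cases hi : i ∈ K <;> simp [hi, wc]
  simp_rw [h2]
  rw [Finset.prod_ite_mem, Finset.univ_inter, Finset.prod_const]

/-- The edge indices of the `j`-th right vertex towards the first `k` left vertices. -/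
def Kset (n k : ℕ) (j : Fin n) : Finset (Fin (n * n)) :=
  (Finset.univ.filter fun i : Fin n => (i : ℕ) < k).image (fun i => finProdFinEquiv (i, j))

/-- Right vertex `j` has no neighbour among the first `k` left vertices. -/
def goodRow (n k : ℕ) (A : Fin (n * n) → Bool) (j : Fin n) : Prop :=
  ∀ c ∈ Kset n k j, A c = false

/-- Indicator of `goodRow`. -/
def Xv (n k : ℕ) (j : Fin n) (A : Fin (n * n) → Bool) : ℝ := ind (goodRow n k A j)

lemma sum_Xv (n k : ℕ) (A : Fin (n * n) → Bool) :
    ∑ j, Xv n k j A = ((Finset.univ.filter (goodRow n k A)).card : ℝ) :=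
  sum_ind _ _

lemma card_filter_lt (n k : ℕ) (hk : k ≤ n) :
    (Finset.univ.filter fun i : Fin n => (i : ℕ) < k).card = k := by
  have h : (Finset.univ.filter fun i : Fin n => (i : ℕ) < k).card = (Finset.range k).card := by
    apply Finset.card_bij (fun (i : Fin n) _ => (i : ℕ))
    · intro a ha; simp only [Finset.mem_filter] at ha; simp [ha.2]
    · intro a _ b _ h; exact Fin.val_injective h
    · intro x hx
      rw [Finset.mem_range] at hx
      exact ⟨⟨x, lt_of_lt_of_le hx hk⟩, by simp [hx], rfl⟩
  rw [h, Finset.card_range]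

lemma card_Kset (n k : ℕ) (hk : k ≤ n) (j : Fin n) : (Kset n k j).card = k := by
  rw [Kset, Finset.card_image_of_injective _ (fun a b h => by
    simpa using (finProdFinEquiv.injective h))]
  exact card_filter_lt n k hk

lemma Kset_disjoint (n k : ℕ) {j j' : Fin n} (h : j ≠ j') :
    Disjoint (Kset n k j) (Kset n k j') := by
  rw [Finset.disjoint_left]
  intro c hc hc'
  simp only [Kset, Finset.mem_image, Finset.mem_filter] at hc hc'
  obtain ⟨i, _, rfl⟩ := hc
  obtain ⟨i', _, he⟩ := hc'
  exact h (congrArg Prod.snd (finProdFinEquiv.injective he)).symm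

lemma sum_Wt (m : ℕ) (p : ℝ) : ∑ a : Fin m → Bool, Wt m p a = 1 := by
  have h := key_prod p (∅ : Finset (Fin m))
  simp only [Finset.card_empty, pow_zero] at h
  rw [← h]
  apply Finset.sum_congr rfl
  intro a _
  rw [ind_congr (by simp : (∀ c ∈ (∅ : Finset (Fin m)), a c = false) ↔ True), ind, if_pos trivial,
    mul_one]

lemma sum_Wt_X (n k : ℕ) (hk : k ≤ n) (p : ℝ) (j : Fin n) :
    ∑ A : Fin (n * n) → Bool, Wt (n * n) p A * Xv n k j A = (1 - p) ^ k := by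
  conv_rhs => rw [← card_Kset n k hk j]
  exact key_prod p _

lemma Xv_mul_self (n k : ℕ) (j : Fin n) (A : Fin (n * n) → Bool) :
    Xv n k j A * Xv n k j A = Xv n k j A := by
  unfold Xv; rw [ind_mul_ind]; exact ind_congr and_self_iff

lemma sum_Wt_XX (n k : ℕ) (hk : k ≤ n) (p : ℝ) {j j' : Fin n} (h : j ≠ j') :
    ∑ A : Fin (n * n) → Bool, Wt (n * n) p A * (Xv n k j A * Xv n k j' A)
      = ((1 - p) ^ k) ^ 2 := by
  have hx : ∀ A : Fin (n * n) → Bool, Xv n k j A * Xv n k j' A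
      = ind (∀ c ∈ Kset n k j ∪ Kset n k j', A c = false) := by
    intro A
    rw [Xv, Xv, ind_mul_ind]
    exact ind_congr (by rw [Finset.forall_mem_union]; rfl)
  rw [Finset.sum_congr rfl (fun A _ => by rw [hx A]), key_prod p,
    Finset.card_union_of_disjoint (Kset_disjoint n k h),
    card_Kset n k hk, card_Kset n k hk, pow_add, sq]

lemma chebyshev (n k : ℕ) (p t c : ℝ) (hn : 0 < n) (hk : k ≤ n)
    (h0 : 0 ≤ p) (h1 : p ≤ 1) (hc : 0 < c) (htc : t + c ≤ (1 - p) ^ k) :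
    ∑ A ∈ Finset.univ.filter
        (fun A : Fin (n * n) → Bool => ((Finset.univ.filter (goodRow n k A)).card : ℝ) < t * n),
      Wt (n * n) p A ≤ 1 / (c ^ 2 * n) := by
  set q : ℝ := (1 - p) ^ k with hq
  have hq0 : 0 ≤ q := pow_nonneg (by linarith) _
  have hq1 : q ≤ 1 := pow_le_one₀ (by linarith) (by linarith)
  set T : (Fin (n * n) → Bool) → ℝ := fun A => ∑ j, Xv n k j A with hT
  have hnR : (0 : ℝ) < n := by exact_mod_cast hn
  have hS1 : ∑ A : Fin (n * n) → Bool, Wt (n * n) p A * T A = n * q := by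
    simp_rw [hT, Finset.mul_sum]
    rw [Finset.sum_comm]
    rw [Finset.sum_congr rfl (fun j _ => sum_Wt_X n k hk p j)]
    rw [Finset.sum_const, Finset.card_univ, Fintype.card_fin, nsmul_eq_mul]
  have key : ∀ j j' : Fin n, (∑ A : Fin (n * n) → Bool, Wt (n * n) p A * (Xv n k j A * Xv n k j' A))
      = if j' = j then q else q ^ 2 := by
    intro j j'
    by_cases hjj : j' = j
    · subst hjj
      rw [if_pos rfl, Finset.sum_congr rfl (fun A _ => by rw [Xv_mul_self]),
        sum_Wt_X n k hk p j']
    · rw [if_neg hjj]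
      exact sum_Wt_XX n k hk p (fun hh => hjj hh.symm)
  have hS2 : ∑ A : Fin (n * n) → Bool, Wt (n * n) p A * (T A) ^ 2
      = n * (q + ((n : ℝ) - 1) * q ^ 2) := by
    have expand : ∀ A, Wt (n * n) p A * (T A) ^ 2
        = ∑ j, ∑ j', Wt (n * n) p A * (Xv n k j A * Xv n k j' A) := by
      intro A
      rw [hT, sq, Finset.sum_mul_sum]
      simp_rw [Finset.mul_sum]
    rw [Finset.sum_congr rfl (fun A _ => expand A), Finset.sum_comm]
    have inner : ∀ j : Fin n,
        (∑ A : Fin (n * n) → Bool, ∑ j', Wt (n * n) p A * (Xv n k j A * Xv n k j' A))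
        = q + ((n : ℝ) - 1) * q ^ 2 := by
      intro j
      rw [Finset.sum_comm, Finset.sum_congr rfl (fun j' _ => key j j')]
      have h3 : ∑ j' : Fin n, (if j' = j then q else q ^ 2)
          = ∑ j' : Fin n, (q ^ 2 + if j' = j then q - q ^ 2 else 0) := by
        apply Finset.sum_congr rfl
        intro j' _
        by_cases hjj : j' = j <;> simp [hjj]
      rw [h3, Finset.sum_add_distrib, Finset.sum_const, Finset.sum_ite_eq',
        if_pos (Finset.mem_univ j), Finset.card_univ, Fintype.card_fin, nsmul_eq_mul]
      ring
    rw [Finset.sum_congr rfl (fun j _ => inner j), Finset.sum_const, Finset.card_univ,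
      Fintype.card_fin, nsmul_eq_mul]
  have hVar : ∑ A : Fin (n * n) → Bool, Wt (n * n) p A * (T A - n * q) ^ 2
      = n * q - n * q ^ 2 := by
    have expand : ∀ A, Wt (n * n) p A * (T A - n * q) ^ 2
        = Wt (n * n) p A * (T A) ^ 2 - (2 * n * q) * (Wt (n * n) p A * T A)
          + (n ^ 2 * q ^ 2) * Wt (n * n) p A := by
      intro A; ring
    rw [Finset.sum_congr rfl (fun A _ => expand A), Finset.sum_add_distrib,
      Finset.sum_sub_distrib, ← Finset.mul_sum, ← Finset.mul_sum, hS1, hS2, sum_Wt]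
    ring
  set B := Finset.univ.filter
      (fun A : Fin (n * n) → Bool => ((Finset.univ.filter (goodRow n k A)).card : ℝ) < t * n)
    with hB
  have hbound : ∀ A ∈ B, (c * n) ^ 2 * Wt (n * n) p A ≤ Wt (n * n) p A * (T A - n * q) ^ 2 := by
    intro A hA
    rw [hB, Finset.mem_filter] at hA
    have hTA : T A < t * n := by
      show (∑ j, Xv n k j A) < t * n
      rw [sum_Xv]; exact hA.2
    have h1' : c * n ≤ n * q - T A := by nlinarith
    have h2' : (c * n) ^ 2 ≤ (T A - n * q) ^ 2 := by
      have h3' := pow_le_pow_left₀ (by positivity : (0:ℝ) ≤ c * n) h1' 2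
      calc (c * n) ^ 2 ≤ (n * q - T A) ^ 2 := h3'
        _ = (T A - n * q) ^ 2 := by ring
    calc (c * n) ^ 2 * Wt (n * n) p A ≤ (T A - n * q) ^ 2 * Wt (n * n) p A :=
          mul_le_mul_of_nonneg_right h2' (Wt_nonneg _ h0 h1 A)
      _ = Wt (n * n) p A * (T A - n * q) ^ 2 := by ring
  have hchain : (c * n) ^ 2 * ∑ A ∈ B, Wt (n * n) p A ≤ (n : ℝ) := by
    rw [Finset.mul_sum]
    calc ∑ A ∈ B, (c * n) ^ 2 * Wt (n * n) p A
        ≤ ∑ A ∈ B, Wt (n * n) p A * (T A - n * q) ^ 2 := Finset.sum_le_sum hbound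
      _ ≤ ∑ A : Fin (n * n) → Bool, Wt (n * n) p A * (T A - n * q) ^ 2 :=
          Finset.sum_le_sum_of_subset_of_nonneg (Finset.filter_subset _ _)
            (fun A _ _ => mul_nonneg (Wt_nonneg _ h0 h1 A) (sq_nonneg _))
      _ = n * q - n * q ^ 2 := hVar
      _ ≤ n := by nlinarith
  have hcn : (0 : ℝ) < (c * n) ^ 2 := by positivity
  calc ∑ A ∈ B, Wt (n * n) p A ≤ (n : ℝ) / (c * n) ^ 2 := (le_div_iff₀' hcn).2 hchain
    _ = 1 / (c ^ 2 * n) := by field_simp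

lemma pi_coin_prob (m : ℕ) (p : ℝ) (h0 : 0 ≤ p) (h1 : p ≤ 1) :
    IsProbabilityMeasure (Measure.pi fun _ : Fin m => coin p) := by
  constructor
  rw [← Finset.coe_univ, pi_coin_finset p h0 h1, sum_Wt, ENNReal.ofReal_one]

lemma prob_bad (n k : ℕ) (p t c : ℝ) (hn : 0 < n) (hk : k ≤ n)
    (h0 : 0 ≤ p) (h1 : p ≤ 1) (hc : 0 < c) (htc : t + c ≤ (1 - p) ^ k) :
    Measure.pi (fun _ : Fin (n * n) => coin p)
        {A | ((Finset.univ.filter (goodRow n k A)).card : ℝ) < t * n}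
      ≤ ENNReal.ofReal (1 / (c ^ 2 * n)) := by
  have hset : {A : Fin (n * n) → Bool | ((Finset.univ.filter (goodRow n k A)).card : ℝ) < t * n}
      = ↑(Finset.univ.filter
          (fun A : Fin (n * n) → Bool =>
            ((Finset.univ.filter (goodRow n k A)).card : ℝ) < t * n)) := by
    ext A; simp
  rw [hset, pi_coin_finset p h0 h1]
  exact ENNReal.ofReal_le_ofReal (chebyshev n k p t c hn hk h0 h1 hc htc)

/-- If at least `t*n` rows are good, the target event holds. -/
lemma event_of_good (n k : ℕ) (ε d : ℝ) (hk : k ≤ n)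
    (hkL : (1 - ε) * (Real.log d / d) * n ≤ (k : ℝ))
    (A : Fin (n * n) → Bool)
    (hA : (1 - ε) * d ^ (ε - 1) * n ≤ ((Finset.univ.filter (goodRow n k A)).card : ℝ)) :
    ∃ S : Set (Vtx n), IsIndepSet n A S ∧
      (1 - ε) * (Real.log d / d) * n ≤ ((leftPart S).ncard : ℝ) ∧
      (1 - ε) * d ^ (ε - 1) * n ≤ ((rightPart S).ncard : ℝ) := by
  refine ⟨(Sum.inl '' {i : Fin n | (i : ℕ) < k}) ∪ (Sum.inr '' {j | goodRow n k A j}), ?_, ?_, ?_⟩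
  · rintro u hu v hv hadj
    rcases u with i | j <;> rcases v with i' | j'
    · exact hadj
    · -- u = inl i, v = inr j'
      have hik : (i : ℕ) < k := by
        rcases hu with h | h
        · obtain ⟨i0, hi0, he⟩ := h; cases Sum.inl_injective he; exact hi0
        · obtain ⟨j0, _, he⟩ := h; exact absurd he (by simp)
      have hgood : goodRow n k A j' := by
        rcases hv with h | h
        · obtain ⟨i0, _, he⟩ := h; exact absurd he (by simp)
        · obtain ⟨j0, hj0, he⟩ := h; cases Sum.inr_injective he; exact hj0
      have hmem : finProdFinEquiv (i, j') ∈ Kset n k j' :=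
        Finset.mem_image.2 ⟨i, by simp [hik], rfl⟩
      have := hgood _ hmem
      rw [adjB] at hadj
      rw [this] at hadj
      exact Bool.false_ne_true hadj
    · have hik : (i' : ℕ) < k := by
        rcases hv with h | h
        · obtain ⟨i0, hi0, he⟩ := h; cases Sum.inl_injective he; exact hi0
        · obtain ⟨j0, _, he⟩ := h; exact absurd he (by simp)
      have hgood : goodRow n k A j := by
        rcases hu with h | h
        · obtain ⟨i0, _, he⟩ := h; exact absurd he (by simp)
        · obtain ⟨j0, hj0, he⟩ := h; cases Sum.inr_injective he; exact hj0
      have hmem : finProdFinEquiv (i', j) ∈ Kset n k j :=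
        Finset.mem_image.2 ⟨i', by simp [hik], rfl⟩
      have := hgood _ hmem
      rw [adjB] at hadj
      rw [this] at hadj
      exact Bool.false_ne_true hadj
    · exact hadj
  · have hL : leftPart ((Sum.inl '' {i : Fin n | (i : ℕ) < k})
        ∪ (Sum.inr '' {j | goodRow n k A j})) = Sum.inl '' {i : Fin n | (i : ℕ) < k} := by
      rw [leftPart]
      ext u
      constructor
      · rintro ⟨hu, i, rfl⟩
        rcases hu with h | h
        · exact h
        · obtain ⟨j0, _, he⟩ := h; exact absurd he (by simp)
      · rintro ⟨i, hi, rfl⟩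
        exact ⟨Or.inl ⟨i, hi, rfl⟩, ⟨i, rfl⟩⟩
    rw [hL, Set.ncard_image_of_injective _ Sum.inl_injective]
    have hset : {i : Fin n | (i : ℕ) < k}
        = ↑(Finset.univ.filter fun i : Fin n => (i : ℕ) < k) := by ext i; simp
    rw [hset, Set.ncard_coe_finset, card_filter_lt n k hk]
    exact hkL
  · have hR : rightPart ((Sum.inl '' {i : Fin n | (i : ℕ) < k})
        ∪ (Sum.inr '' {j | goodRow n k A j})) = Sum.inr '' {j | goodRow n k A j} := by
      rw [rightPart]
      ext u
      constructor
      · rintro ⟨hu, j, rfl⟩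
        rcases hu with h | h
        · obtain ⟨i0, _, he⟩ := h; exact absurd he (by simp)
        · exact h
      · rintro ⟨j, hj, rfl⟩
        exact ⟨Or.inr ⟨j, hj, rfl⟩, ⟨j, rfl⟩⟩
    rw [hR, Set.ncard_image_of_injective _ Sum.inr_injective]
    have hset : {j : Fin n | goodRow n k A j}
        = ↑(Finset.univ.filter (goodRow n k A)) := by ext j; simp
    rw [hset, Set.ncard_coe_finset]
    exact hA

/-- For every `ε ∈ (0,1)` and every real `d > 1`, the probability that
`G^bip_{n,d}` contains an independent set `I` with `|I∩L| ≥ (1−ε)·(log d/d)·n` and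
`|I∩R| ≥ (1−ε)·d^{ε−1}·n` tends to `1` as `n → ∞`. -/
theorem stmt15 (ε : ℝ) (hε0 : 0 < ε) (hε1 : ε < 1) (d : ℝ) (hd : 1 < d) :
    Filter.Tendsto
      (fun n : ℕ => edgeMeasure n d
        {A | ∃ S : Set (Vtx n), IsIndepSet n A S ∧
          (1 - ε) * (Real.log d / d) * n ≤ ((leftPart S).ncard : ℝ) ∧
          (1 - ε) * d ^ (ε - 1) * n ≤ ((rightPart S).ncard : ℝ)})
      Filter.atTop (nhds 1) := by
  have hd0 : (0 : ℝ) < d := lt_trans one_pos hd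
  have hlogd : 0 < Real.log d := Real.log_pos hd
  set β : ℝ := (1 - ε) * (Real.log d / d) with hβ
  have hβ0 : 0 < β := by
    apply mul_pos (by linarith) (div_pos hlogd hd0)
  have hβ1 : β < 1 := by
    have hld : Real.log d < d := by
      have := Real.log_lt_sub_one_of_pos hd0 (ne_of_gt hd)
      linarith
    have h1 : Real.log d / d < 1 := (div_lt_one hd0).2 hld
    nlinarith [div_pos hlogd hd0]
  set t : ℝ := (1 - ε) * d ^ (ε - 1) with ht
  set c : ℝ := (ε / 2) * d ^ (ε - 1) with hc
  have hdpow : 0 < d ^ (ε - 1) := Real.rpow_pos_of_pos hd0 _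
  have hc0 : 0 < c := by positivity
  have ht0 : 0 ≤ t := mul_nonneg (by linarith) hdpow.le
  have htc : t + c < d ^ (ε - 1) := by nlinarith
  set k : ℕ → ℕ := fun n => ⌈β * n⌉₊ with hkdef
  -- eventual facts
  have hnat : Tendsto (fun n : ℕ => (n : ℝ)) atTop atTop := tendsto_natCast_atTop_atTop
  have hE1 : ∀ᶠ n : ℕ in atTop, d + 1 ≤ (n : ℝ) := hnat.eventually_ge_atTop (d + 1)
  have hE2 : ∀ᶠ n : ℕ in atTop, (1 - β) * n ≥ 2 :=
    (hnat.const_mul_atTop (by linarith : (0:ℝ) < 1 - β)).eventually_ge_atTop 2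
  -- limit of the exponential lower bound
  have hlim : Tendsto (fun n : ℕ => (β * n + 1) * Real.log (1 - d / n)) atTop
      (nhds (-(β * d))) := by
    have h1 : Tendsto (fun n : ℕ => (n : ℝ) * Real.log (1 - d / n)) atTop (nhds (-d)) := by
      have := (Real.tendsto_mul_log_one_add_div_atTop (-d)).comp hnat
      refine this.congr (fun n => ?_)
      simp only [Function.comp]
      rw [neg_div, ← sub_eq_add_neg]
    have h2 : Tendsto (fun n : ℕ => Real.log (1 - d / n)) atTop (nhds 0) := by
      have h3 : Tendsto (fun n : ℕ => ((n : ℝ))⁻¹ * ((n : ℝ) * Real.log (1 - d / n))) atTop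
          (nhds (0 * (-d))) :=
        Tendsto.mul (tendsto_inv_atTop_zero.comp hnat) h1
      rw [zero_mul] at h3
      refine h3.congr' ?_
      filter_upwards [eventually_ge_atTop 1] with n hn
      have : ((n : ℝ)) ≠ 0 := by positivity
      field_simp
    have h4 : Tendsto (fun n : ℕ => β * ((n : ℝ) * Real.log (1 - d / n))
        + Real.log (1 - d / n)) atTop (nhds (β * (-d) + 0)) :=
      (h1.const_mul β).add h2
    rw [add_zero] at h4
    have h5 := Tendsto.congr (fun n : ℕ => by ring :
      ∀ n : ℕ, β * ((n : ℝ) * Real.log (1 - d / n)) + Real.log (1 - d / n)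
        = (β * n + 1) * Real.log (1 - d / n)) h4
    rw [mul_neg] at h5
    exact h5
  have hexp : Tendsto (fun n : ℕ => Real.exp ((β * n + 1) * Real.log (1 - d / n))) atTop
      (nhds (d ^ (ε - 1))) := by
    have h6 := (Real.continuous_exp.tendsto _).comp hlim
    have h7 : Real.exp (-(β * d)) = d ^ (ε - 1) := by
      rw [Real.rpow_def_of_pos hd0]
      congr 1
      rw [hβ]
      field_simp
      ring
    rw [h7] at h6
    exact h6
  have hE3 : ∀ᶠ n : ℕ in atTop, t + c ≤ (1 - d / n) ^ (k n) := by
    filter_upwards [hexp.eventually_const_le htc, hE1] with n hgen hdn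
    have hn0 : (0 : ℝ) < n := by linarith
    have hdn' : d / n < 1 := (div_lt_one hn0).2 (by linarith)
    have hx : (0 : ℝ) < 1 - d / n := by linarith
    have hx1 : 1 - d / n ≤ 1 := by
      have : 0 ≤ d / n := by positivity
      linarith
    have hlognp : Real.log (1 - d / n) ≤ 0 := Real.log_nonpos hx.le hx1
    have hkle : ((k n : ℕ) : ℝ) ≤ β * n + 1 :=
      (Nat.ceil_lt_add_one (by positivity : (0:ℝ) ≤ β * n)).le
    have hmul : (β * n + 1) * Real.log (1 - d / n) ≤ (k n : ℝ) * Real.log (1 - d / n) :=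
      mul_le_mul_of_nonpos_right hkle hlognp
    have hpow : (1 - d / n) ^ (k n) = Real.exp ((k n : ℝ) * Real.log (1 - d / n)) := by
      rw [← Real.exp_log hx, ← Real.exp_nat_mul, Real.exp_log hx]
    calc t + c ≤ Real.exp ((β * n + 1) * Real.log (1 - d / n)) := hgen
      _ ≤ Real.exp ((k n : ℝ) * Real.log (1 - d / n)) := Real.exp_le_exp.2 hmul
      _ = (1 - d / n) ^ (k n) := hpow.symm
  have hE4 : ∀ᶠ n : ℕ in atTop, k n ≤ n := by
    filter_upwards [hE2] with n h2
    have hkle : ((k n : ℕ) : ℝ) ≤ β * n + 1 :=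
      (Nat.ceil_lt_add_one (by positivity : (0:ℝ) ≤ β * n)).le
    have : ((k n : ℕ) : ℝ) ≤ (n : ℝ) := by nlinarith
    exact_mod_cast this
  -- main eventual lower bound
  have hlow : ∀ᶠ n : ℕ in atTop,
      1 - ENNReal.ofReal (1 / (c ^ 2 * n)) ≤ edgeMeasure n d
        {A | ∃ S : Set (Vtx n), IsIndepSet n A S ∧
          (1 - ε) * (Real.log d / d) * n ≤ ((leftPart S).ncard : ℝ) ∧
          (1 - ε) * d ^ (ε - 1) * n ≤ ((rightPart S).ncard : ℝ)} := by
    filter_upwards [hE1, hE3, hE4, eventually_gt_atTop 0] with n h1 h3 h4 hn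
    have hn0 : (0 : ℝ) < n := by exact_mod_cast hn
    have h0p : 0 ≤ d / n := by positivity
    have h1p : d / n ≤ 1 := (div_le_one hn0).2 (by linarith)
    haveI : IsProbabilityMeasure (edgeMeasure n d) := pi_coin_prob (n * n) (d / n) h0p h1p
    set Bad : Set (Fin (n * n) → Bool) :=
      {A | ((Finset.univ.filter (goodRow n (k n) A)).card : ℝ) < t * n} with hBadDef
    have hBad : edgeMeasure n d Bad ≤ ENNReal.ofReal (1 / (c ^ 2 * n)) := by
      have := prob_bad n (k n) (d / n) t c hn h4 h0p h1p hc0 h3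
      exact this
    have hincl : Badᶜ ⊆ {A | ∃ S : Set (Vtx n), IsIndepSet n A S ∧
          (1 - ε) * (Real.log d / d) * n ≤ ((leftPart S).ncard : ℝ) ∧
          (1 - ε) * d ^ (ε - 1) * n ≤ ((rightPart S).ncard : ℝ)} := by
      intro A hA
      have hge : t * n ≤ ((Finset.univ.filter (goodRow n (k n) A)).card : ℝ) :=
        not_lt.1 hA
      exact event_of_good n (k n) ε d h4 (by rw [← hβ]; exact Nat.le_ceil (β * n)) A hge
    have hmeas : MeasurableSet Bad := (Set.to_countable _).measurableSet
    calc 1 - ENNReal.ofReal (1 / (c ^ 2 * n)) ≤ 1 - edgeMeasure n d Bad :=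
          tsub_le_tsub_left hBad 1
      _ = edgeMeasure n d Badᶜ := (prob_compl_eq_one_sub hmeas).symm
      _ ≤ _ := measure_mono hincl
  have hup : ∀ᶠ n : ℕ in atTop,
      edgeMeasure n d
        {A | ∃ S : Set (Vtx n), IsIndepSet n A S ∧
          (1 - ε) * (Real.log d / d) * n ≤ ((leftPart S).ncard : ℝ) ∧
          (1 - ε) * d ^ (ε - 1) * n ≤ ((rightPart S).ncard : ℝ)} ≤ 1 := by
    filter_upwards [hE1, eventually_gt_atTop 0] with n h1 hn
    have hn0 : (0 : ℝ) < n := by exact_mod_cast hn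
    haveI : IsProbabilityMeasure (edgeMeasure n d) :=
      pi_coin_prob (n * n) (d / n) (by positivity) ((div_le_one hn0).2 (by linarith))
    exact prob_le_one
  have hlowlim : Tendsto (fun n : ℕ => 1 - ENNReal.ofReal (1 / (c ^ 2 * n))) atTop (nhds 1) := by
    have hr : Tendsto (fun n : ℕ => (1 / (c ^ 2 * n) : ℝ)) atTop (nhds 0) := by
      have := (hnat.const_mul_atTop (by positivity : (0:ℝ) < c ^ 2)).inv_tendsto_atTop
      refine this.congr (fun n => ?_)
      simp [one_div]
    have ho : Tendsto (fun n : ℕ => ENNReal.ofReal (1 / (c ^ 2 * n))) atTop (nhds 0) := by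
      have := (ENNReal.continuous_ofReal.tendsto 0).comp hr
      rw [ENNReal.ofReal_zero] at this
      exact this
    have := ENNReal.Tendsto.sub (tendsto_const_nhds : Tendsto (fun _ : ℕ => (1:ENNReal)) atTop (nhds 1))
      ho (Or.inl ENNReal.one_ne_top)
    simpa using this
  exact tendsto_of_tendsto_of_tendsto_of_le_of_le' hlowlim tendsto_const_nhds hlow hup
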